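/- If 0 ≤ α < 1 and β ≥ 2, then the alpha-beta transformation T_{α,β} is transitive, i.e., there exists x ∈ [0,1] such that {T_{α,β}^n(x) : n ≥ 0} is dense in [0,1]. -/

import Mathlib

set_option maxHeartbeats 1000000

open Filter Set

namespace Paper

noncomputable def Fm (α β : ℝ) : ℝ → ℝ := fun y => Int.fract (β * y + α)
lemma Fm_mem (α β y : ℝ) : Fm α β y ∈ Set.Ico (0 : ℝ) 1 :=
  ⟨Int.fract_nonneg _, Int.fract_lt_one _⟩
lemma Fm_iter_mem (α β : ℝ) {x : ℝ} (hx : x ∈ Set.Ico (0 : ℝ) 1) (n : ℕ) :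
    (Fm α β)^[n] x ∈ Set.Ico (0 : ℝ) 1 := by
  cases n with
  | zero => exact hx
  | succ n => rw [Function.iterate_succ_apply']; exact Fm_mem α β _

/-- One expansion step for `β > 2`. -/
lemma step (α : ℝ) {β : ℝ} (hβ : 2 < β) {n : ℕ} {w z c : ℝ}
    (hw : 0 ≤ w) (hz : z < 1) (hwz : w < z)
    (hf : ∀ x, w ≤ x → x ≤ z → (Fm α β)^[n] x = β ^ n * x + c) :
    ∃ w' z' c', w ≤ w' ∧ w' < z' ∧ z' ≤ z ∧
      (∀ x, w' ≤ x → x ≤ z' → (Fm α β)^[n + 1] x = β ^ (n + 1) * x + c') ∧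
      min ((β + 2) / 4 * (β ^ n * (z - w))) 2⁻¹ ≤ β ^ (n + 1) * (z' - w') := by
  have hβ0 : (0:ℝ) < β := by linarith
  have hpn : (0:ℝ) < β ^ n := pow_pos hβ0 n
  obtain ⟨A, hAdef⟩ : ∃ A : ℝ, A = β ^ n * w + c := ⟨_, rfl⟩
  obtain ⟨B, hBdef⟩ : ∃ B : ℝ, B = β ^ n * z + c := ⟨_, rfl⟩
  have hA : 0 ≤ A := by
    have h1 := (Fm_iter_mem α β ⟨hw, lt_trans hwz hz⟩ n).1
    rw [hf w le_rfl hwz.le] at h1; rw [hAdef]; exact h1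
  have hB : B < 1 := by
    have h1 := (Fm_iter_mem α β ⟨le_trans hw hwz.le, hz⟩ n).2
    rw [hf z hwz.le le_rfl] at h1; rw [hBdef]; exact h1
  have hAB : A < B := by
    have := mul_lt_mul_of_pos_left hwz hpn
    rw [hAdef, hBdef]; linarith
  have hL : β ^ n * (z - w) = B - A := by rw [hAdef, hBdef]; ring
  have hLpos : 0 < B - A := by linarith
  -- key affine identity
  have key1 : ∀ t : ℝ, β ^ n * (w + t / β ^ n) + c = A + t := by
    intro t
    rw [hAdef, mul_add, mul_div_cancel₀ _ hpn.ne']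
    ring
  have key2 : ∀ t : ℝ, β ^ (n + 1) * (t / β ^ n) = β * t := by
    intro t
    rw [pow_succ, mul_comm (β ^ n) β, mul_assoc, mul_div_cancel₀ _ hpn.ne']
  have key3 : ∀ t : ℝ, w + t / β ^ n ≤ z ↔ A + t ≤ B := by
    intro t
    constructor
    · intro h
      have := mul_le_mul_of_nonneg_left h hpn.le
      rw [← sub_nonneg] at *
      calc (0:ℝ) ≤ β ^ n * z - β ^ n * (w + t / β ^ n) := by linarith [key1 t]; 
        _ = B - (A + t) := by rw [← key1 t, hBdef]; ring
    · intro h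
      have h2 : β ^ n * (w + t / β ^ n) + c ≤ β ^ n * z + c := by
        rw [key1, ← hBdef]; exact h
      have h3 : β ^ n * (w + t / β ^ n) ≤ β ^ n * z := by linarith
      exact le_of_mul_le_mul_left h3 hpn
  set K : ℤ := ⌊β * A + α⌋ with hK
  have hKle : (K : ℝ) ≤ β * A + α := Int.floor_le _
  have hKlt : β * A + α < (K : ℝ) + 1 := Int.lt_floor_add_one _
  obtain ⟨s, hsK, hAs, hsA⟩ : ∃ s : ℝ, β * s + α = (K : ℝ) + 1 ∧ A < s ∧ β * (s - A) ≤ 1 := by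
    refine ⟨((K : ℝ) + 1 - α) / β, by field_simp; ring, ?_, ?_⟩
    · rw [lt_div_iff₀ hβ0]; nlinarith
    · rw [mul_sub, mul_div_cancel₀ _ hβ0.ne']; linarith
  -- branch value lemmas
  have hleft : ∀ y : ℝ, A ≤ y → β * y + α < (K : ℝ) + 1 → Fm α β y = β * y + α - K := by
    intro y h1 h2
    have hfl : ⌊β * y + α⌋ = K := by
      rw [Int.floor_eq_iff]
      refine ⟨?_, ?_⟩
      · have : β * A ≤ β * y := by nlinarith
        push_cast; linarith
      · push_cast; linarith
    show Int.fract (β * y + α) = _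
    rw [Int.fract, hfl]
  have hright : ∀ y : ℝ, s ≤ y → β * y + α < (K : ℝ) + 2 → Fm α β y = β * y + α - (K + 1) := by
    intro y h1 h2
    have hfl : ⌊β * y + α⌋ = K + 1 := by
      rw [Int.floor_eq_iff]
      refine ⟨?_, ?_⟩
      · have : β * s ≤ β * y := by nlinarith
        push_cast; linarith
      · push_cast; linarith
    show Int.fract (β * y + α) = _
    rw [Int.fract, hfl]; push_cast; ring
  by_cases hc1 : B < s
  · -- no breakpoint in [A,B]
    refine ⟨w, z, β * c + α - K, le_rfl, hwz, le_rfl, ?_, ?_⟩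
    · intro x hx1 hx2
      rw [Function.iterate_succ_apply', hf x hx1 hx2]
      have hy1 : A ≤ β ^ n * x + c := by rw [hAdef]; nlinarith
      have hy2 : β ^ n * x + c ≤ B := by rw [hBdef]; nlinarith
      rw [hleft _ hy1 (by nlinarith)]
      ring
    · calc min ((β + 2) / 4 * (β ^ n * (z - w))) 2⁻¹ ≤ (β + 2) / 4 * (β ^ n * (z - w)) :=
            min_le_left _ _
        _ ≤ β ^ (n + 1) * (z - w) := by rw [pow_succ]; nlinarith
  · push_neg at hc1
    by_cases hc2 : B - A ≤ 2 * (B - s)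
    · -- keep the right piece [s, s + d]
      obtain ⟨d, hd⟩ : ∃ d : ℝ, d = min (B - s) (1 / (2 * β)) := ⟨_, rfl⟩
      have hd0 : 0 < d := by
        rw [hd]; apply lt_min (by linarith) (by positivity)
      have hdB : d ≤ B - s := hd ▸ min_le_left _ _
      have hdβ : β * d ≤ 1 / 2 := by
        have h1 : d ≤ 1 / (2 * β) := hd ▸ min_le_right _ _
        have h2 : β * (1 / (2 * β)) = 1 / 2 := by field_simp
        nlinarith
      refine ⟨w + (s - A) / β ^ n, w + (s + d - A) / β ^ n, β * c + α - (K + 1),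
        ?_, ?_, ?_, ?_, ?_⟩
      · have : 0 ≤ (s - A) / β ^ n := by
          apply div_nonneg (by linarith) hpn.le
        linarith
      · have : (s - A) / β ^ n < (s + d - A) / β ^ n :=
          div_lt_div_of_pos_right (by linarith) hpn
        linarith
      · rw [key3]; linarith
      · intro x hx1 hx2
        have hxw : w ≤ x := by
          have : 0 ≤ (s - A) / β ^ n := div_nonneg (by linarith) hpn.le
          linarith
        have hxz : x ≤ z := le_trans hx2 ((key3 _).mpr (by linarith))
        rw [Function.iterate_succ_apply', hf x hxw hxz]
        have hy1 : s ≤ β ^ n * x + c := by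
          have h2 := key1 (s - A)
          nlinarith [mul_le_mul_of_nonneg_left hx1 hpn.le]
        have hy2 : β ^ n * x + c ≤ s + d := by
          have h2 := key1 (s + d - A)
          nlinarith [mul_le_mul_of_nonneg_left hx2 hpn.le]
        rw [hright _ hy1 (by nlinarith)]
        push_cast; ring
      · have h1 : w + (s + d - A) / β ^ n - (w + (s - A) / β ^ n) = d / β ^ n := by
          ring
        rw [h1, key2]
        rcases le_total (B - s) (1 / (2 * β)) with h | h
        · have hde : d = B - s := hd.trans (min_eq_left h)
          calc min ((β + 2) / 4 * (β ^ n * (z - w))) 2⁻¹ ≤ (β + 2) / 4 * (β ^ n * (z - w)) :=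
                min_le_left _ _
            _ ≤ β * d := by rw [hde, hL]; nlinarith
        · have hde : d = 1 / (2 * β) := hd.trans (min_eq_right h)
          have h2 : β * d = 1 / 2 := by rw [hde]; field_simp
          calc min ((β + 2) / 4 * (β ^ n * (z - w))) 2⁻¹ ≤ 2⁻¹ := min_le_right _ _
            _ ≤ β * d := by rw [h2]; norm_num
    · -- keep the left piece [A, A + e]
      push_neg at hc2
      have hsB : (B - A) / 2 < s - A := by linarith
      obtain ⟨e, he⟩ : ∃ e : ℝ, e = min ((β + 2) * (B - A) / (4 * β)) (1 / (2 * β)) := ⟨_, rfl⟩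
      have he0 : 0 < e := by
        rw [he]; apply lt_min (by positivity) (by positivity)
      have heA : e < s - A := by
        have h1 : e ≤ (β + 2) * (B - A) / (4 * β) := he ▸ min_le_left _ _
        have h2 : (β + 2) * (B - A) / (4 * β) < (B - A) / 2 := by
          rw [div_lt_div_iff₀ (by positivity) (by norm_num)]
          nlinarith
        linarith
      have heB : e ≤ B - A := by linarith
      refine ⟨w, w + e / β ^ n, β * c + α - K, le_rfl, ?_, ?_, ?_, ?_⟩
      · have : 0 < e / β ^ n := by positivity
        linarith
      · rw [key3]; linarith
      · intro x hx1 hx2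
        have hxz : x ≤ z := le_trans hx2 ((key3 _).mpr (by linarith))
        rw [Function.iterate_succ_apply', hf x hx1 hxz]
        have hy1 : A ≤ β ^ n * x + c := by rw [hAdef]; nlinarith
        have hy2 : β ^ n * x + c ≤ A + e := by
          have h2 := key1 e
          nlinarith [mul_le_mul_of_nonneg_left hx2 hpn.le]
        have hy3 : β * (β ^ n * x + c) + α < (K : ℝ) + 1 := by nlinarith
        rw [hleft _ hy1 hy3]
        ring
      · have h1 : w + e / β ^ n - w = e / β ^ n := by ring
        rw [h1, key2]
        rcases le_total ((β + 2) * (B - A) / (4 * β)) (1 / (2 * β)) with h | h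
        · have hde : e = (β + 2) * (B - A) / (4 * β) := he.trans (min_eq_left h)
          have h2 : β * e = (β + 2) * (B - A) / 4 := by
            rw [hde]; field_simp
          calc min ((β + 2) / 4 * (β ^ n * (z - w))) 2⁻¹ ≤ (β + 2) / 4 * (β ^ n * (z - w)) :=
                min_le_left _ _
            _ ≤ β * e := by rw [h2, hL]; nlinarith
        · have hde : e = 1 / (2 * β) := he.trans (min_eq_right h)
          have h2 : β * e = 1 / 2 := by rw [hde]; field_simp
          calc min ((β + 2) / 4 * (β ^ n * (z - w))) 2⁻¹ ≤ 2⁻¹ := min_le_right _ _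
            _ ≤ β * e := by rw [h2]; norm_num

/-- Iterated growth: reach an affine image of length `min(γ^k L₀, 1/2)`. -/
lemma grow (α : ℝ) {β : ℝ} (hβ : 2 < β) {u v : ℝ} (hu : 0 ≤ u) (huv : u < v) (hv : v < 1) :
    ∀ k : ℕ, ∃ n, ∃ w z c : ℝ, u ≤ w ∧ w < z ∧ z ≤ v ∧
      (∀ x, w ≤ x → x ≤ z → (Fm α β)^[n] x = β ^ n * x + c) ∧
      min (((β + 2) / 4) ^ k * (v - u)) 2⁻¹ ≤ β ^ n * (z - w) := by
  intro k
  induction k with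
  | zero =>
    refine ⟨0, u, v, 0, le_rfl, huv, le_rfl, ?_, ?_⟩
    · intro x _ _; simp
    · simp only [pow_zero, one_mul]
      exact min_le_left _ _
  | succ k ih =>
    obtain ⟨n, w, z, c, h1, h2, h3, h4, h5⟩ := ih
    obtain ⟨w', z', c', g1, g2, g3, g4, g5⟩ :=
      step α hβ (le_trans hu h1) (lt_of_le_of_lt h3 hv) h2 h4
    refine ⟨n + 1, w', z', c', le_trans h1 g1, g2, le_trans g3 h3, g4, ?_⟩
    have hγ1 : (1:ℝ) ≤ (β + 2) / 4 := by linarith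
    have hγ0 : (0:ℝ) < (β + 2) / 4 := by linarith
    have hM0 : 0 < β ^ n * (z - w) := by
      have := pow_pos (by linarith : (0:ℝ) < β) n
      nlinarith
    refine le_trans (le_min ?_ (min_le_right _ _)) g5
    rcases le_total (((β + 2) / 4) ^ k * (v - u)) 2⁻¹ with h | h
    · calc min (((β + 2) / 4) ^ (k + 1) * (v - u)) 2⁻¹ ≤ ((β + 2) / 4) ^ (k + 1) * (v - u) :=
            min_le_left _ _
        _ = (β + 2) / 4 * (((β + 2) / 4) ^ k * (v - u)) := by rw [pow_succ]; ring
        _ ≤ (β + 2) / 4 * (β ^ n * (z - w)) := by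
            apply mul_le_mul_of_nonneg_left ?_ hγ0.le
            rw [min_eq_left h] at h5; exact h5
    · have h6 : (2:ℝ)⁻¹ ≤ β ^ n * (z - w) := by rw [min_eq_right h] at h5; exact h5
      calc min (((β + 2) / 4) ^ (k + 1) * (v - u)) 2⁻¹ ≤ 2⁻¹ := min_le_right _ _
        _ ≤ β ^ n * (z - w) := h6
        _ ≤ (β + 2) / 4 * (β ^ n * (z - w)) := by nlinarith

/-- Key lemma for `β > 2`. -/
lemma key_gt (α : ℝ) {β : ℝ} (hβ : 2 < β) {u v a b : ℝ} (hu : 0 ≤ u) (huv : u < v) (hv : v < 1)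
    (ha : 0 ≤ a) (hab : a < b) (hb : b < 1) :
    ∃ w z n, u ≤ w ∧ w < z ∧ z ≤ v ∧
      ∀ x, w ≤ x → x ≤ z → a ≤ (Fm α β)^[n] x ∧ (Fm α β)^[n] x ≤ b := by
  have hβ0 : (0:ℝ) < β := by linarith
  have hvu : 0 < v - u := by linarith
  obtain ⟨k, hk⟩ := pow_unbounded_of_one_lt (2⁻¹ / (v - u)) (by linarith : (1:ℝ) < (β + 2) / 4)
  obtain ⟨n, w, z, c, h1, h2, h3, h4, h5⟩ := grow α hβ hu huv hv k
  have hw : 0 ≤ w := le_trans hu h1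
  have hz : z < 1 := lt_of_le_of_lt h3 hv
  have hhalf : (2:ℝ)⁻¹ ≤ β ^ n * (z - w) := by
    refine le_trans (le_min ?_ le_rfl) h5
    rw [div_lt_iff₀ hvu] at hk
    nlinarith
  have hpn : (0:ℝ) < β ^ n := pow_pos hβ0 n
  obtain ⟨A, hAdef⟩ : ∃ A : ℝ, A = β ^ n * w + c := ⟨_, rfl⟩
  obtain ⟨B, hBdef⟩ : ∃ B : ℝ, B = β ^ n * z + c := ⟨_, rfl⟩
  have hA : 0 ≤ A := by
    have g1 := (Fm_iter_mem α β ⟨hw, lt_trans h2 hz⟩ n).1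
    rw [h4 w le_rfl h2.le] at g1; rw [hAdef]; exact g1
  have hB : B < 1 := by
    have g1 := (Fm_iter_mem α β ⟨le_trans hw h2.le, hz⟩ n).2
    rw [h4 z h2.le le_rfl] at g1; rw [hBdef]; exact g1
  have hL : β ^ n * (z - w) = B - A := by rw [hAdef, hBdef]; ring
  have hLhalf : (2:ℝ)⁻¹ ≤ B - A := by rw [← hL]; exact hhalf
  have key1 : ∀ t : ℝ, β ^ n * (w + t / β ^ n) + c = A + t := by
    intro t
    rw [hAdef, mul_add, mul_div_cancel₀ _ hpn.ne']
    ring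
  have key3 : ∀ t : ℝ, w + t / β ^ n ≤ z ↔ A + t ≤ B := by
    intro t
    constructor
    · intro h
      have h7 := mul_le_mul_of_nonneg_left h hpn.le
      have h8 := key1 t
      rw [hBdef]; nlinarith
    · intro h
      have h3' : β ^ n * (w + t / β ^ n) ≤ β ^ n * z := by
        have := key1 t
        rw [hBdef] at h; nlinarith
      exact le_of_mul_le_mul_left h3' hpn
  set K : ℤ := ⌊β * A + α⌋ with hK
  have hKle : (K : ℝ) ≤ β * A + α := Int.floor_le _
  have hKlt : β * A + α < (K : ℝ) + 1 := Int.lt_floor_add_one _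
  obtain ⟨s, hsK, hAs, hsA⟩ : ∃ s : ℝ, β * s + α = (K : ℝ) + 1 ∧ A < s ∧ β * (s - A) ≤ 1 := by
    refine ⟨((K : ℝ) + 1 - α) / β, by field_simp; ring, ?_, ?_⟩
    · rw [lt_div_iff₀ hβ0]; nlinarith
    · rw [mul_sub, mul_div_cancel₀ _ hβ0.ne']; linarith
  have hsB : s ≤ B := by nlinarith
  have hleft : ∀ y : ℝ, A ≤ y → β * y + α < (K : ℝ) + 1 → Fm α β y = β * y + α - K := by
    intro y g1 g2
    have hfl : ⌊β * y + α⌋ = K := by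
      rw [Int.floor_eq_iff]
      refine ⟨?_, ?_⟩
      · have : β * A ≤ β * y := by nlinarith
        push_cast; linarith
      · push_cast; linarith
    show Int.fract (β * y + α) = _
    rw [Int.fract, hfl]
  have hright : ∀ y : ℝ, s ≤ y → β * y + α < (K : ℝ) + 2 → Fm α β y = β * y + α - (K + 1) := by
    intro y g1 g2
    have hfl : ⌊β * y + α⌋ = K + 1 := by
      rw [Int.floor_eq_iff]
      refine ⟨?_, ?_⟩
      · have : β * s ≤ β * y := by nlinarith
        push_cast; linarith
      · push_cast; linarith
    show Int.fract (β * y + α) = _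
    rw [Int.fract, hfl]; push_cast; ring
  by_cases hcb : b ≤ β * (B - s)
  · -- pull the target back through the branch to the right of the breakpoint
    refine ⟨w + (s + a / β - A) / β ^ n, w + (s + b / β - A) / β ^ n, n + 1, ?_, ?_, ?_, ?_⟩
    · have g0 : 0 ≤ a / β := by positivity
      have : 0 ≤ (s + a / β - A) / β ^ n := by
        apply div_nonneg (by linarith) hpn.le
      linarith
    · apply add_lt_add_right
      apply div_lt_div_of_pos_right ?_ hpn
      have : a / β < b / β := by
        apply div_lt_div_of_pos_right hab hβ0
      linarith
    · refine le_trans ((key3 _).mpr ?_) h3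
      have : b / β ≤ B - s := by
        rw [div_le_iff₀ hβ0]; nlinarith
      linarith
    · intro x hx1 hx2
      have g0 : 0 ≤ a / β := by positivity
      have hxw : w ≤ x := by
        have : 0 ≤ (s + a / β - A) / β ^ n := div_nonneg (by linarith) hpn.le
        linarith
      have hxz : x ≤ z := by
        refine le_trans hx2 ((key3 _).mpr ?_)
        have : b / β ≤ B - s := by rw [div_le_iff₀ hβ0]; nlinarith
        linarith
      rw [Function.iterate_succ_apply', h4 x hxw hxz]
      have hy1 : s + a / β ≤ β ^ n * x + c := by
        have g2 := key1 (s + a / β - A)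
        nlinarith [mul_le_mul_of_nonneg_left hx1 hpn.le]
      have hy2 : β ^ n * x + c ≤ s + b / β := by
        have g2 := key1 (s + b / β - A)
        nlinarith [mul_le_mul_of_nonneg_left hx2 hpn.le]
      have hbβ : β * (b / β) = b := by field_simp
      have haβ : β * (a / β) = a := by field_simp
      rw [hright _ (by linarith) (by nlinarith)]
      constructor
      · nlinarith
      · nlinarith
  · -- pull the target back through the branch to the left of the breakpoint
    push_neg at hcb
    obtain ⟨c1, hc1def⟩ : ∃ c1 : ℝ, c1 = β * A + α - K := ⟨_, rfl⟩
    have hc10 : 0 ≤ c1 := by rw [hc1def]; linarith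
    have hc11 : c1 = 1 - β * (s - A) := by rw [hc1def]; nlinarith
    have hc1b : c1 < b := by nlinarith
    obtain ⟨a2, ha2def⟩ : ∃ a2 : ℝ, a2 = max a c1 := ⟨_, rfl⟩
    have ha2b : a2 < b := by rw [ha2def]; exact max_lt hab hc1b
    have ha2a : a ≤ a2 := ha2def ▸ le_max_left _ _
    have ha2c : c1 ≤ a2 := ha2def ▸ le_max_right _ _
    have hbs : (b - c1) / β < s - A := by
      rw [div_lt_iff₀ hβ0]; nlinarith
    have hnn : 0 ≤ ((a2 - c1) / β) / β ^ n :=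
      div_nonneg (div_nonneg (by linarith) hβ0.le) hpn.le
    have hzz : w + ((b - c1) / β) / β ^ n ≤ z :=
      (key3 ((b - c1) / β)).mpr (by linarith)
    refine ⟨w + ((a2 - c1) / β) / β ^ n, w + ((b - c1) / β) / β ^ n, n + 1, ?_, ?_, ?_, ?_⟩
    · linarith
    · apply add_lt_add_right
      apply div_lt_div_of_pos_right ?_ hpn
      apply div_lt_div_of_pos_right (by linarith) hβ0
    · exact le_trans hzz h3
    · intro x hx1 hx2
      have hxw : w ≤ x := by linarith
      have hxz : x ≤ z := le_trans hx2 hzz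
      rw [Function.iterate_succ_apply', h4 x hxw hxz]
      have hy1 : A + (a2 - c1) / β ≤ β ^ n * x + c := by
        have g2 := key1 ((a2 - c1) / β)
        have g3 := mul_le_mul_of_nonneg_left hx1 hpn.le
        rw [mul_add] at g2 g3
        linarith
      have hy2 : β ^ n * x + c ≤ A + (b - c1) / β := by
        have g2 := key1 ((b - c1) / β)
        have g3 := mul_le_mul_of_nonneg_left hx2 hpn.le
        rw [mul_add] at g2 g3
        linarith
      have haβ : β * ((a2 - c1) / β) = a2 - c1 := by field_simp
      have hbβ : β * ((b - c1) / β) = b - c1 := by field_simp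
      have gy2 := mul_le_mul_of_nonneg_left hy2 hβ0.le
      have gy1 := mul_le_mul_of_nonneg_left hy1 hβ0.le
      rw [mul_add, mul_add, hbβ] at gy2
      rw [mul_add, mul_add, haβ] at gy1
      have hy3 : β * (β ^ n * x + c) + α < (K : ℝ) + 1 := by
        rw [hc1def] at gy2; linarith
      have hq : 0 ≤ (a2 - c1) / β := div_nonneg (by linarith) hβ0.le
      rw [hleft _ (by linarith) hy3]
      constructor
      · rw [hc1def] at gy1; linarith
      · rw [hc1def] at gy2; linarith


/-- Iteration formula in the integer case `β = 2`. -/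
lemma iter_two (α : ℝ) (n : ℕ) (x : ℝ) :
    (Fm α 2)^[n + 1] x = Int.fract (2 ^ (n + 1) * x + α * (2 ^ (n + 1) - 1)) := by
  induction n with
  | zero =>
    show Int.fract (2 * x + α) = _
    congr 1; ring
  | succ n ih =>
    rw [Function.iterate_succ_apply', ih]
    show Int.fract (2 * Int.fract (2 ^ (n+1) * x + α * (2 ^ (n+1) - 1)) + α) = _
    set y := 2 ^ (n+1) * x + α * (2 ^ (n+1) - 1) with hy
    have h1 : 2 * Int.fract y + α = (2 * y + α) - ((2 * ⌊y⌋ : ℤ) : ℝ) := by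
      rw [Int.fract]; push_cast; ring
    rw [h1, Int.fract_sub_intCast]
    congr 1
    rw [hy]; ring

/-- Key lemma in the case `β = 2` : from any interval inside `[0,1)` a subinterval
maps affinely into any target interval. -/
lemma key_two (α : ℝ) {u v a b : ℝ} (hu : 0 ≤ u) (huv : u < v) (hv : v < 1)
    (ha : 0 ≤ a) (hab : a < b) (hb : b < 1) :
    ∃ w z n, u ≤ w ∧ w < z ∧ z ≤ v ∧
      ∀ x, w ≤ x → x ≤ z → a ≤ (Fm α 2)^[n] x ∧ (Fm α 2)^[n] x ≤ b := by
  have hvu : 0 < v - u := by linarith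
  obtain ⟨m, hm⟩ := pow_unbounded_of_one_lt (2 / (v - u)) (by norm_num : (1:ℝ) < 2)
  set P : ℝ := 2 ^ (m + 1) with hP
  have hP1 : (2:ℝ) ^ m ≤ P := by
    rw [hP, pow_succ]; nlinarith [pow_pos (by norm_num : (0:ℝ) < 2) m]
  have hPpos : (0:ℝ) < P := pow_pos (by norm_num) _
  have hP2 : 2 ≤ P * (v - u) := by
    have h2 : 2 < 2 ^ m * (v - u) := by
      rw [div_lt_iff₀ hvu] at hm; linarith
    nlinarith
  set c : ℝ := α * (P - 1) with hc
  set M : ℤ := ⌈P * u + c - a⌉ with hM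
  refine ⟨(M + a - c) / P, (M + b - c) / P, m + 1, ?_, ?_, ?_, ?_⟩
  · rw [le_div_iff₀ hPpos]
    have := Int.le_ceil (P * u + c - a)
    rw [← hM] at this
    nlinarith
  · have : (M:ℝ) + a - c < M + b - c := by linarith
    exact div_lt_div_of_pos_right this hPpos
  · rw [div_le_iff₀ hPpos]
    have h3 : (M : ℝ) < P * u + c - a + 1 := by
      have := Int.ceil_lt_add_one (P * u + c - a)
      rw [← hM] at this; exact this
    nlinarith
  · intro x hwx hxz
    rw [iter_two α m x, ← hc]
    have hx1 : (M : ℝ) + a ≤ P * x + c := by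
      rw [div_le_iff₀ hPpos] at hwx; nlinarith
    have hx2 : P * x + c ≤ (M : ℝ) + b := by
      rw [le_div_iff₀ hPpos] at hxz; nlinarith
    have hself : Int.fract (P * x + c - M) = P * x + c - M := by
      apply Int.fract_eq_self.mpr
      constructor <;> [linarith; linarith]
    have : Int.fract (P * x + c) = P * x + c - M := by
      rw [← Int.fract_sub_intCast (P * x + c) M]; exact hself
    rw [this]
    constructor <;> linarith

/-- From the key lemma, construct a point with dense orbit via nested intervals. -/
lemma dense_point (α β : ℝ)
    (key : ∀ u v : ℝ, 0 ≤ u → u < v → v < 1 → ∀ a b : ℝ, 0 ≤ a → a < b → b < 1 →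
      ∃ w z n, u ≤ w ∧ w < z ∧ z ≤ v ∧
        ∀ x, w ≤ x → x ≤ z → a ≤ (Fm α β)^[n] x ∧ (Fm α β)^[n] x ≤ b) :
    ∃ x : ℝ, x ∈ Set.Ico (0 : ℝ) 1 ∧
      ∀ a b : ℝ, 0 ≤ a → a < b → b < 1 →
        ∃ n, a ≤ (Fm α β)^[n] x ∧ (Fm α β)^[n] x ≤ b := by
  classical
  set e : ℕ → ℚ × ℚ := fun n => (Denumerable.eqv (ℚ × ℚ)).symm n with he
  have hesurj : Function.Surjective e := (Denumerable.eqv (ℚ × ℚ)).symm.surjective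
  have hstep : ∀ p : ℝ × ℝ, ∀ t : ℚ × ℚ, ∃ p' : ℝ × ℝ,
      (0 ≤ p.1 ∧ p.1 < p.2 ∧ p.2 < 1) →
        ((0 ≤ p'.1 ∧ p'.1 < p'.2 ∧ p'.2 < 1) ∧ p.1 ≤ p'.1 ∧ p'.2 ≤ p.2 ∧
          ((0 ≤ (t.1 : ℝ) ∧ (t.1 : ℝ) < (t.2 : ℝ) ∧ (t.2 : ℝ) < 1) →
            ∃ n, ∀ x, p'.1 ≤ x → x ≤ p'.2 →
              (t.1 : ℝ) ≤ (Fm α β)^[n] x ∧ (Fm α β)^[n] x ≤ (t.2 : ℝ))) := by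
    intro p t
    by_cases h : (0 ≤ p.1 ∧ p.1 < p.2 ∧ p.2 < 1) ∧
        (0 ≤ (t.1 : ℝ) ∧ (t.1 : ℝ) < (t.2 : ℝ) ∧ (t.2 : ℝ) < 1)
    · obtain ⟨⟨hp1, hp2, hp3⟩, ht1, ht2, ht3⟩ := h
      obtain ⟨w, z, n, g1, g2, g3, g4⟩ := key p.1 p.2 hp1 hp2 hp3 _ _ ht1 ht2 ht3
      exact ⟨(w, z), fun _ => ⟨⟨le_trans hp1 g1, g2, lt_of_le_of_lt g3 hp3⟩, g1, g3,
        fun _ => ⟨n, g4⟩⟩⟩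
    · refine ⟨p, fun hp => ⟨hp, le_rfl, le_rfl, fun ht => absurd ⟨hp, ht⟩ h⟩⟩
  choose G hG using hstep
  set S : ℕ → ℝ × ℝ := fun k => Nat.rec ((1/4 : ℝ), (1/2 : ℝ)) (fun k p => G p (e k)) k
    with hS
  have hSsucc : ∀ k, S (k + 1) = G (S k) (e k) := fun k => rfl
  have hInv : ∀ k, 0 ≤ (S k).1 ∧ (S k).1 < (S k).2 ∧ (S k).2 < 1 := by
    intro k
    induction k with
    | zero =>
      have h0 : S 0 = ((1/4 : ℝ), (1/2 : ℝ)) := rfl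
      rw [h0]
      norm_num
    | succ k ih => rw [hSsucc]; exact (hG (S k) (e k) ih).1
  have hmono : Monotone fun k => (S k).1 :=
    monotone_nat_of_le_succ fun k => by
      rw [hSsucc]; exact (hG (S k) (e k) (hInv k)).2.1
  have hanti : Antitone fun k => (S k).2 :=
    antitone_nat_of_succ_le fun k => by
      rw [hSsucc]; exact (hG (S k) (e k) (hInv k)).2.2.1
  have hwz : ∀ j k, (S j).1 ≤ (S k).2 := by
    intro j k
    calc (S j).1 ≤ (S (max j k)).1 := hmono (le_max_left _ _)
      _ ≤ (S (max j k)).2 := (hInv _).2.1.le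
      _ ≤ (S k).2 := hanti (le_max_right _ _)
  have hbdd : BddAbove (Set.range fun k => (S k).1) := by
    refine ⟨(S 0).2, ?_⟩
    rintro r ⟨j, rfl⟩
    exact hwz j 0
  set x : ℝ := ⨆ k, (S k).1 with hx
  have hxw : ∀ k, (S k).1 ≤ x := fun k => le_ciSup hbdd k
  have hxz : ∀ k, x ≤ (S k).2 := fun k => ciSup_le fun j => hwz j k
  have hx01 : x ∈ Set.Ico (0 : ℝ) 1 := by
    constructor
    · exact le_trans (hInv 0).1 (hxw 0)
    · exact lt_of_le_of_lt (hxz 0) (hInv 0).2.2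
  refine ⟨x, hx01, ?_⟩
  intro a b ha hab hb
  obtain ⟨q1, hq1a, hq1b⟩ := exists_rat_btwn hab
  obtain ⟨q2, hq2a, hq2b⟩ := exists_rat_btwn hq1b
  obtain ⟨j, hj⟩ := hesurj (q1, q2)
  have hv := (hG (S j) (e j) (hInv j)).2.2.2
  rw [hj] at hv
  obtain ⟨n, hn⟩ := hv ⟨by exact_mod_cast le_trans ha hq1a.le,
    by exact_mod_cast hq2a, by exact_mod_cast lt_trans hq2b hb⟩
  have hx1 : (G (S j) (e j)).1 ≤ x := by
    have := hxw (j + 1); rwa [hSsucc j] at this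
  have hx2 : x ≤ (G (S j) (e j)).2 := by
    have := hxz (j + 1); rwa [hSsucc j] at this
  rw [hj] at hx1 hx2
  obtain ⟨g1, g2⟩ := hn x hx1 hx2
  refine ⟨n, le_trans hq1a.le ?_, le_trans ?_ hq2b.le⟩
  · exact g1
  · exact g2

/-- **Proposition.** If `0 ≤ α < 1` and `β ≥ 2`, then the alpha-beta transformation
`T_{α,β}` (given by `T(x) = βx + α - ⌊βx + α⌋` on `[0,1)` and `T(1) = lim_{x↗1} T(x)`)
is transitive: some point of `[0,1]` has dense forward orbit in `[0,1]`. -/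
theorem alphabeta_transitive (α β : ℝ) (hα0 : 0 ≤ α) (hα1 : α < 1) (hβ : 2 ≤ β)
    (T : ℝ → ℝ)
    (hT : ∀ x ∈ Set.Ico (0 : ℝ) 1, T x = β * x + α - ⌊β * x + α⌋)
    (hT1 : Tendsto (fun x : ℝ => β * x + α - ⌊β * x + α⌋)
      (nhdsWithin 1 (Set.Iio 1)) (nhds (T 1))) :
    ∃ x ∈ Set.Icc (0 : ℝ) 1, Set.Icc (0 : ℝ) 1 ⊆ closure {y | ∃ n : ℕ, T^[n] x = y} := by
  classical
  have key : ∀ u v : ℝ, 0 ≤ u → u < v → v < 1 → ∀ a b : ℝ, 0 ≤ a → a < b → b < 1 →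
      ∃ w z n, u ≤ w ∧ w < z ∧ z ≤ v ∧
        ∀ x, w ≤ x → x ≤ z → a ≤ (Fm α β)^[n] x ∧ (Fm α β)^[n] x ≤ b := by
    rcases eq_or_lt_of_le hβ with h | h
    · intro u v hu huv hv a b ha hab hb
      subst h
      exact key_two α hu huv hv ha hab hb
    · intro u v hu huv hv a b ha hab hb
      exact key_gt α h hu huv hv ha hab hb
  obtain ⟨x, hx01, hhit⟩ := dense_point α β key
  have htf : ∀ n : ℕ, ∀ y : ℝ, y ∈ Set.Ico (0 : ℝ) 1 → T^[n] y = (Fm α β)^[n] y := by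
    intro n
    induction n with
    | zero => intro y _; rfl
    | succ n ih =>
      intro y hy
      rw [Function.iterate_succ_apply', Function.iterate_succ_apply', ih y hy]
      have hmem := Fm_iter_mem α β hy n
      rw [hT _ hmem]
      simp only [Fm, Int.fract]
  refine ⟨x, ⟨hx01.1, hx01.2.le⟩, ?_⟩
  intro y hy
  rw [Metric.mem_closure_iff]
  intro ε hε
  obtain ⟨c, hcdef⟩ : ∃ c : ℝ, c = max (y - ε/3) 0 := ⟨_, rfl⟩
  obtain ⟨d, hddef⟩ : ∃ d : ℝ, d = min (y + ε/3) 1 := ⟨_, rfl⟩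
  have hc0 : 0 ≤ c := hcdef ▸ le_max_right _ _
  have hcy : y - ε/3 ≤ c := hcdef ▸ le_max_left _ _
  have hdy : d ≤ y + ε/3 := hddef ▸ min_le_left _ _
  have hd1 : d ≤ 1 := hddef ▸ min_le_right _ _
  have hcd : c < d := by
    rw [hcdef, hddef]
    refine lt_min (max_lt (by linarith) (by linarith [hy.1, hε])) ?_
    exact max_lt (by linarith [hy.2]) one_pos
  have hb1 : (c + d)/2 < 1 := by linarith
  obtain ⟨n, hn1, hn2⟩ := hhit c ((c + d)/2) hc0 (by linarith) hb1
  refine ⟨T^[n] x, ⟨n, rfl⟩, ?_⟩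
  rw [htf n x hx01, Real.dist_eq, abs_lt]
  constructor
  · linarith
  · linarith

end Paper
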